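/- arXiv:2502.11674 — 2 statements merged into one kernel-verified Lean document; each statement's English description precedes it below -/
import Mathlib

section
/- For every graph G, the maximum degree over 2-connected components of G is bounded if and only if G excludes both large subdivided fans and large subdivided dipoles: concretely, if some 2-connected component C of G has a vertex v of degree at least f(s) in C (for a suitable function f), then G contains a subdivision of the s-fan or a subdivision of the s-dipole. -/
open SimpleGraph

/-- `x` is a (reflexive) ancestor of `y` in the tree `T` rooted at `r`,
expressed metrically: `x` lies on the unique `r`–`y` path. -/
def AncIn {V : Type*} (T : SimpleGraph V) (r x y : V) : Prop :=
  T.dist r x + T.dist x y = T.dist r y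

/-- A tree-layout of `G`: a rooted tree on the vertex set of `G` such that the endpoints
of every edge of `G` are in ancestor-descendant relation. -/
structure TreeLayout {V : Type*} (G : SimpleGraph V) where
  tree : SimpleGraph V
  isTree : tree.IsTree
  root : V
  layout : ∀ ⦃x y : V⦄, G.Adj x y → AncIn tree root x y ∨ AncIn tree root y x

namespace TreeLayout

variable {V : Type*} {G : SimpleGraph V}

/-- `x` is an ancestor of `y` (reflexively) in the tree-layout. -/
def Anc (L : TreeLayout G) (x y : V) : Prop := AncIn L.tree L.root x y

def StrictAnc (L : TreeLayout G) (x y : V) : Prop := L.Anc x y ∧ x ≠ y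

/-- The bandwidth of the tree-layout is at most `k`: neighbours in `G` are at
tree-distance at most `k`. -/
def BandwidthLE (L : TreeLayout G) (k : ℕ) : Prop :=
  ∀ ⦃x y : V⦄, G.Adj x y → L.tree.dist x y ≤ k

/-- The interval `[a,b]` of the tree-layout: vertices on the tree path from `a` to `b`
(for `a` an ancestor of `b`). -/
def interval (L : TreeLayout G) (a b : V) : Set V := {z : V | L.Anc a z ∧ L.Anc z b}

end TreeLayout

/-- Treebandwidth: the minimum bandwidth over tree-layouts of `G`. -/
noncomputable def treebandwidth {V : Type*} (G : SimpleGraph V) : ℕ :=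
  sInf {k | ∃ L : TreeLayout G, L.BandwidthLE k}

/-- Treedepth: the minimum depth (number of vertices on a root-to-leaf path) of a
tree-layout (elimination tree) of `G`. -/
noncomputable def treedepth {V : Type*} (G : SimpleGraph V) : ℕ :=
  sInf {k | ∃ L : TreeLayout G, ∀ v : V, L.tree.dist L.root v + 1 ≤ k}

/-- A tree-partition of `G`: a partition of `V(G)` indexed by the nodes of a tree such that
every edge of `G` has both ends in one part or in parts indexed by adjacent nodes. -/
structure TreePartition {V : Type*} (G : SimpleGraph V) where
  ι : Type
  tree : SimpleGraph ι
  isTree : tree.IsTree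
  part : V → ι
  adj : ∀ ⦃x y : V⦄, G.Adj x y → part x = part y ∨ tree.Adj (part x) (part y)

/-- Tree-partition-width: minimum over tree-partitions of the maximum part size. -/
noncomputable def treePartitionWidth {V : Type*} (G : SimpleGraph V) : ℕ :=
  sInf {k | ∃ P : TreePartition G, ∀ i : P.ι, {v : V | P.part v = i}.ncard ≤ k}

/-- The connected component of `v` in the subgraph of `G` induced by `S`. -/
def connCompIn {V : Type*} (G : SimpleGraph V) (S : Set V) (v : V) : Set V :=
  {w : V | ∃ (hv : v ∈ S) (hw : w ∈ S), (G.induce S).Reachable ⟨v, hv⟩ ⟨w, hw⟩}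

/-- `RootedTreedepthLE G U S n` expresses `td(G[S], U) ≤ n` for the rooted treedepth:
it is `0` when `S` misses `U`, and otherwise one may delete one vertex from each
connected component and recurse. -/
inductive RootedTreedepthLE {V : Type*} (G : SimpleGraph V) (U : Set V) : Set V → ℕ → Prop
  | base (S : Set V) (n : ℕ) (h : S ∩ U = ∅) : RootedTreedepthLE G U S n
  | step (S : Set V) (n : ℕ) (pick : ∀ v : V, v ∈ S → V)
      (hpick : ∀ (v : V) (hv : v ∈ S), pick v hv ∈ connCompIn G S v)
      (h : ∀ (v : V) (hv : v ∈ S),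
        RootedTreedepthLE G U (connCompIn G S v \ {pick v hv}) n) :
      RootedTreedepthLE G U S (n + 1)

/-- A `U`-rooted minor model of the path on `k` vertices in `G`. -/
structure RootedPathMinor {V : Type*} (G : SimpleGraph V) (U : Set V) (k : ℕ) where
  branch : Fin k → Set V
  connected : ∀ i, (G.induce (branch i)).Connected
  disjoint : ∀ i j, i ≠ j → Disjoint (branch i) (branch j)
  rooted : ∀ i, (branch i ∩ U).Nonempty
  adj : ∀ i j : Fin k, (j : ℕ) = (i : ℕ) + 1 → ∃ a ∈ branch i, ∃ b ∈ branch j, G.Adj a b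

/-- A subdivision of the `k`-fan in `G` with universal (center) vertex `v`:
branch vertices `b 0, …, b (k-1)` of the path, internally disjoint spokes from `v`
and internally disjoint path segments between consecutive branch vertices. -/
structure FanSubdivision {V : Type*} (G : SimpleGraph V) (v : V) (k : ℕ) where
  b : Fin k → V
  binj : Function.Injective b
  bne : ∀ i, b i ≠ v
  spoke : ∀ i : Fin k, G.Walk v (b i)
  spokePath : ∀ i, (spoke i).IsPath
  seg : ∀ (i : Fin k) (h : (i : ℕ) + 1 < k), G.Walk (b i) (b ⟨(i : ℕ) + 1, h⟩)
  segPath : ∀ i h, (seg i h).IsPath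
  vNotinSeg : ∀ i h, v ∉ (seg i h).support
  spokeDisj : ∀ i j, i ≠ j →
    {x | x ∈ (spoke i).support} ∩ {x | x ∈ (spoke j).support} = {v}
  spokeSegDisj : ∀ i j h,
    {x | x ∈ (spoke i).support} ∩ {x | x ∈ (seg j h).support} ⊆
      ({b i} : Set V) ∩ {b j, b ⟨(j : ℕ) + 1, h⟩}
  segDisj : ∀ i j hi hj, i ≠ j →
    {x | x ∈ (seg i hi).support} ∩ {x | x ∈ (seg j hj).support} ⊆
      ({b i, b ⟨(i : ℕ) + 1, hi⟩} : Set V) ∩ {b j, b ⟨(j : ℕ) + 1, hj⟩}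

/-- A `p`-centered colouring: every (nonempty) connected induced subgraph either receives
more than `p` colours or has a uniquely coloured vertex. -/
def IsPCenteredColoring {V : Type*} (G : SimpleGraph V) (p : ℕ) (c : V → ℕ) : Prop :=
  ∀ S : Set V, S.Nonempty → (G.induce S).Connected →
    p < (c '' S).ncard ∨ ∃ x ∈ S, ∀ y ∈ S, c y = c x → y = x

/-- Treewidth, characterised via tree-layouts: the minimum over tree-layouts of the maximum
over nodes `u` of the number of strict ancestors of `u` that are `G`-neighbours of some
descendant of `u` (including `u`). -/
noncomputable def treewidthTL {V : Type*} (G : SimpleGraph V) : ℕ :=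
  sInf {k | ∃ L : TreeLayout G, ∀ u : V,
    {a : V | L.StrictAnc a u ∧ ∃ d : V, L.Anc u d ∧ G.Adj a d}.ncard ≤ k}

/-- The pruned subtree of `x` in a tree-layout: descendants of `x` (including `x`) having a
neighbour of `x` among their own descendants. -/
def prunedSubtree {V : Type*} {G : SimpleGraph V} (L : TreeLayout G) (x : V) : Set V :=
  {y : V | L.Anc x y ∧ ∃ d : V, L.Anc y d ∧ G.Adj x d}

/-- Treespan: the minimum over tree-layouts of (maximum size of a pruned subtree minus one). -/
noncomputable def treespan {V : Type*} (G : SimpleGraph V) : ℕ :=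
  sInf {k | ∃ L : TreeLayout G, ∀ x : V, (prunedSubtree L x).ncard ≤ k + 1}

/-- A tree decomposition of `G`. -/
structure TreeDecomp {V : Type*} (G : SimpleGraph V) where
  ι : Type
  tree : SimpleGraph ι
  isTree : tree.IsTree
  bag : ι → Set V
  coverV : ∀ v : V, ∃ t, v ∈ bag t
  coverE : ∀ ⦃x y : V⦄, G.Adj x y → ∃ t, x ∈ bag t ∧ y ∈ bag t
  subtree : ∀ v : V, (tree.induce {t : ι | v ∈ bag t}).Connected

/-- Domino treewidth: minimum width over tree decompositions in which every vertex
belongs to at most two bags. -/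
noncomputable def dominoTreewidth {V : Type*} (G : SimpleGraph V) : ℕ :=
  sInf {k | ∃ D : TreeDecomp G, (∀ v : V, {t : D.ι | v ∈ D.bag t}.ncard ≤ 2) ∧
    ∀ t : D.ι, (D.bag t).ncard ≤ k + 1}

/-- Edge-treewidth via tree-layouts: the minimum over tree-layouts of the maximum over nodes
`u` of the number of edges with one endpoint a descendant of `u` (including `u`) and the other
a strict ancestor of `u`. -/
noncomputable def edgeTreewidth {V : Type*} (G : SimpleGraph V) : ℕ :=
  sInf {k | ∃ L : TreeLayout G, ∀ u : V,
    {p : V × V | L.StrictAnc p.1 u ∧ L.Anc u p.2 ∧ G.Adj p.1 p.2}.ncard ≤ k}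

/-- `S` is a block (2-connected component) of `G`: a maximal connected set of vertices whose
induced subgraph has no cutvertex. -/
def IsBlock {V : Type*} (G : SimpleGraph V) (S : Set V) : Prop :=
  S.Nonempty ∧ (G.induce S).Connected ∧
    (∀ x ∈ S, (G.induce (S \ {x})).Preconnected) ∧
    ∀ S' : Set V, S ⊆ S' → (G.induce S').Connected →
      (∀ x ∈ S', (G.induce (S' \ {x})).Preconnected) → S' = S

/-- Biconnected maximum degree: the maximum over blocks of `G` of the maximum degree
inside the block. -/
noncomputable def biconnMaxDegree {V : Type*} (G : SimpleGraph V) : ℕ :=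
  sSup {d | ∃ (S : Set V) (v : V), IsBlock G S ∧ v ∈ S ∧ d = {w ∈ S | G.Adj v w}.ncard}

/-- `G` is 3-connected: more than 3 vertices, and removing any two vertices leaves it
connected. -/
def ThreeConnected {V : Type*} (G : SimpleGraph V) : Prop :=
  3 < Nat.card V ∧ ∀ x y : V, (G.induce {v : V | v ≠ x ∧ v ≠ y}).Connected

/-- `G` has `H` as a minor (branch-set model). -/
def HasMinor {V W : Type*} (G : SimpleGraph V) (H : SimpleGraph W) : Prop :=
  ∃ B : W → Set V, (∀ w, (G.induce (B w)).Connected) ∧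
    (∀ w w', w ≠ w' → Disjoint (B w) (B w')) ∧
    ∀ ⦃w w'⦄, H.Adj w w' → ∃ a ∈ B w, ∃ b ∈ B w', G.Adj a b

/-- Planarity via Wagner's theorem: no `K₅` minor and no `K₃,₃` minor. -/
def PlanarWagner {V : Type*} (G : SimpleGraph V) : Prop :=
  ¬ HasMinor G (completeGraph (Fin 5)) ∧
    ¬ HasMinor G (completeBipartiteGraph (Fin 3) (Fin 3))

/-- A subdivision of the `k`-wheel in `G` with hub `v`. -/
structure WheelSubdivision {V : Type*} (G : SimpleGraph V) (v : V) (k : ℕ) where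
  b : Fin k → V
  binj : Function.Injective b
  bne : ∀ i, b i ≠ v
  spoke : ∀ i : Fin k, G.Walk v (b i)
  spokePath : ∀ i, (spoke i).IsPath
  seg : ∀ i : Fin k, G.Walk (b i) (b (finRotate k i))
  segPath : ∀ i, (seg i).IsPath
  vNotinSeg : ∀ i, v ∉ (seg i).support
  spokeDisj : ∀ i j, i ≠ j →
    {x | x ∈ (spoke i).support} ∩ {x | x ∈ (spoke j).support} = {v}
  spokeSegDisj : ∀ i j,
    {x | x ∈ (spoke i).support} ∩ {x | x ∈ (seg j).support} ⊆
      ({b i} : Set V) ∩ {b j, b (finRotate k j)}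
  segDisj : ∀ i j, i ≠ j →
    {x | x ∈ (seg i).support} ∩ {x | x ∈ (seg j).support} ⊆
      ({b i, b (finRotate k i)} : Set V) ∩ {b j, b (finRotate k j)}

/-- A subdivision of the `k`-dipole with poles `u`, `v`: `k` internally vertex-disjoint
`u`–`v` paths of length at least `2`. -/
structure DipoleSubdivision {V : Type*} (G : SimpleGraph V) (u v : V) (k : ℕ) where
  path : Fin k → G.Walk u v
  isPath : ∀ i, (path i).IsPath
  len : ∀ i, 2 ≤ (path i).length
  disj : ∀ i j, i ≠ j →
    {x | x ∈ (path i).support} ∩ {x | x ∈ (path j).support} = ({u, v} : Set V)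

/-- A separation of `G`. -/
def IsSeparation {V : Type*} (G : SimpleGraph V) (A B : Set V) : Prop :=
  A ∪ B = Set.univ ∧ ∀ a ∈ A \ B, ∀ b ∈ B \ A, ¬ G.Adj a b

/-- `μ(X,Y)`: the minimum order of a separation `(A,B)` with `X ⊆ A` and `Y ⊆ B`. -/
noncomputable def muSep {V : Type*} (G : SimpleGraph V) (X Y : Set V) : ℕ :=
  sInf {n | ∃ A B : Set V, IsSeparation G A B ∧ X ⊆ A ∧ Y ⊆ B ∧ (A ∩ B).ncard = n}

def IsMaximalClique {V : Type*} (G : SimpleGraph V) (K : Set V) : Prop :=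
  G.IsClique K ∧ ∀ K' : Set V, G.IsClique K' → K ⊆ K' → K' = K

/-- `G` is proper chordal: it has a tree-layout in which every maximal clique is an
interval of a root-to-leaf path. -/
def ProperChordal {V : Type*} (G : SimpleGraph V) : Prop :=
  ∃ L : TreeLayout G, ∀ K : Set V, IsMaximalClique G K →
    ∃ a b : V, L.Anc a b ∧ K = L.interval a b

/-- A topological-minor model (subdivision embedding) of `H` in `G`. -/
structure TopMinorEmbedding {W V : Type*} (H : SimpleGraph W) (G : SimpleGraph V) where
  φ : W → V
  inj : Function.Injective φ
  path : ∀ ⦃a b : W⦄, H.Adj a b → G.Walk (φ a) (φ b)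
  isPath : ∀ ⦃a b : W⦄ (h : H.Adj a b), (path h).IsPath
  branchOnPath : ∀ ⦃a b : W⦄ (h : H.Adj a b) (w : W),
    φ w ∈ (path h).support → w = a ∨ w = b
  disj : ∀ ⦃a b c d : W⦄ (hab : H.Adj a b) (hcd : H.Adj c d), s(a, b) ≠ s(c, d) →
    {x | x ∈ (path hab).support} ∩ {x | x ∈ (path hcd).support} ⊆
      ({φ a, φ b} : Set V) ∩ {φ c, φ d}

/-- A subdivision of the star `K_{1,s}` in `H` with all leaves in `X`. -/
structure StarSubdivision {V : Type*} (H : SimpleGraph V) (X : Set V) (s : ℕ) where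
  center : V
  leaf : Fin s → V
  leafInj : Function.Injective leaf
  leafX : ∀ i, leaf i ∈ X
  leafNe : ∀ i, leaf i ≠ center
  path : ∀ i : Fin s, H.Walk center (leaf i)
  isPath : ∀ i, (path i).IsPath
  disj : ∀ i j, i ≠ j →
    {x | x ∈ (path i).support} ∩ {x | x ∈ (path j).support} = {center}

/-- The weight `w(t,U)` of a set `U` at a node `t` of a tree decomposition is at most `a`:
`|β(t) ∩ U|` plus the number of a suitable family of adhesions incident to `t` whose union
hits all paths from `β(t)` to `U ∖ β(t)` is at most `a`. -/
def WeightLE {V : Type*} {G : SimpleGraph V} (D : TreeDecomp G) (U : Set V) (t : D.ι)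
    (a : ℕ) : Prop :=
  ∃ F : Set D.ι, (∀ s ∈ F, D.tree.Adj t s) ∧
    (D.bag t ∩ U).ncard + F.ncard ≤ a ∧
    ∀ ⦃x y : V⦄ (p : G.Walk x y), x ∈ D.bag t → y ∈ U \ D.bag t →
      ∃ z ∈ p.support, ∃ s ∈ F, z ∈ D.bag t ∩ D.bag s

/-- The graph obtained from `G` by subdividing the edge `xy` into a path with `n + 1`
new internal vertices. -/
def subdivideEdge {V : Type*} (G : SimpleGraph V) (x y : V) (n : ℕ) :
    SimpleGraph (V ⊕ Fin (n + 1)) :=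
  SimpleGraph.fromRel (fun a b =>
    (∃ u w : V, a = Sum.inl u ∧ b = Sum.inl w ∧ G.Adj u w ∧
      ¬(u = x ∧ w = y) ∧ ¬(u = y ∧ w = x)) ∨
    (a = Sum.inl x ∧ b = Sum.inr 0) ∨
    (∃ i : Fin n, a = Sum.inr i.castSucc ∧ b = Sum.inr i.succ) ∨
    (a = Sum.inr (Fin.last n) ∧ b = Sum.inl y))

/-- A BFS-tree-like structure on a graph: a root, a parent map and a depth function. -/
structure PTree (V' : Type) (H : SimpleGraph V') where
  p : V' → V'
  d : V' → ℕ
  r : V'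
  hpr : p r = r
  hdr : d r = 0
  adj : ∀ u, u ≠ r → H.Adj (p u) u
  hd : ∀ u, u ≠ r → d (p u) + 1 = d u

namespace PTree

variable {V' : Type} {H : SimpleGraph V'} (T : PTree V' H)

lemma eq_root_of_d_eq_zero {u : V'} (h : T.d u = 0) : u = T.r := by
  by_contra hne
  have := T.hd u hne
  omega

lemma iter_fix (i : ℕ) : T.p^[i] T.r = T.r := by
  induction i with
  | zero => rfl
  | succ n ih => rw [Function.iterate_succ_apply', ih, T.hpr]

lemma d_iter {i : ℕ} {u : V'} (h : i ≤ T.d u) : T.d (T.p^[i] u) = T.d u - i := by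
  induction i generalizing u with
  | zero => simp
  | succ n ih =>
    have hur : u ≠ T.r := by
      intro he; subst he; rw [T.hdr] at h; omega
    have hdp := T.hd u hur
    rw [Function.iterate_succ_apply]
    rw [ih (by omega)]
    omega

lemma iter_root (u : V') : T.p^[T.d u] u = T.r := by
  generalize h : T.d u = n
  induction n generalizing u with
  | zero => simpa using T.eq_root_of_d_eq_zero h
  | succ n ih =>
    have hur : u ≠ T.r := by
      intro he; subst he; rw [T.hdr] at h; omega
    have hdp := T.hd u hur
    rw [Function.iterate_succ_apply]
    exact ih (T.p u) (by omega)

lemma iter_ge {i : ℕ} {u : V'} (h : T.d u ≤ i) : T.p^[i] u = T.r := by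
  have : i = (i - T.d u) + T.d u := by omega
  rw [this, Function.iterate_add_apply, T.iter_root, T.iter_fix]

/-- `u` is a (weak) ancestor of `x`. -/
def Anc (u x : V') : Prop := ∃ i, T.p^[i] x = u

lemma anc_iff {u x : V'} : T.Anc u x ↔ T.d u ≤ T.d x ∧ T.p^[T.d x - T.d u] x = u := by
  constructor
  · rintro ⟨i, rfl⟩
    by_cases h : i ≤ T.d x
    · have hdi := T.d_iter h
      constructor
      · omega
      · have : T.d x - T.d (T.p^[i] x) = i := by omega
        rw [this]
    · have h1 : T.p^[i] x = T.r := T.iter_ge (by omega)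
      rw [h1, T.hdr]
      refine ⟨Nat.zero_le _, ?_⟩
      simpa using T.iter_root x
  · rintro ⟨h1, h2⟩
    exact ⟨_, h2⟩

lemma anc_refl (x : V') : T.Anc x x := ⟨0, rfl⟩

lemma anc_root (x : V') : T.Anc T.r x := ⟨T.d x, T.iter_root x⟩

lemma anc_d_le {u x : V'} (h : T.Anc u x) : T.d u ≤ T.d x := (T.anc_iff.mp h).1

lemma anc_iter_eq {u x : V'} (h : T.Anc u x) : T.p^[T.d x - T.d u] x = u := (T.anc_iff.mp h).2

lemma anc_eq_of_d_eq {u x : V'} (h : T.Anc u x) (hd : T.d u = T.d x) : u = x := by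
  have h2 := T.anc_iter_eq h
  rw [hd] at h2
  simpa using h2.symm

lemma anc_d_lt {u x : V'} (h : T.Anc u x) (hne : u ≠ x) : T.d u < T.d x := by
  rcases Nat.lt_or_ge (T.d u) (T.d x) with h1 | h1
  · exact h1
  · exact absurd (T.anc_eq_of_d_eq h (le_antisymm (T.anc_d_le h) h1)) hne

lemma anc_trans {u w x : V'} (h1 : T.Anc u w) (h2 : T.Anc w x) : T.Anc u x := by
  obtain ⟨i, rfl⟩ := h1
  obtain ⟨j, rfl⟩ := h2
  exact ⟨i + j, (Function.iterate_add_apply _ _ _ _)⟩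

lemma anc_total {u w x : V'} (h1 : T.Anc u x) (h2 : T.Anc w x) : T.Anc u w ∨ T.Anc w u := by
  obtain ⟨i, rfl⟩ := h1
  obtain ⟨j, rfl⟩ := h2
  rcases Nat.le_total i j with h | h
  · right
    refine ⟨j - i, ?_⟩
    rw [← Function.iterate_add_apply]
    congr 1
    omega
  · left
    refine ⟨i - j, ?_⟩
    rw [← Function.iterate_add_apply]
    congr 1
    omega

/-- The child of `u` in the direction of `x`. -/
def dir (u x : V') : V' := T.p^[T.d x - T.d u - 1] x

lemma dir_anc {u x : V'} : T.Anc (T.dir u x) x := ⟨_, rfl⟩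

lemma dir_d {u x : V'} (h : T.Anc u x) (hne : u ≠ x) : T.d (T.dir u x) = T.d u + 1 := by
  have hlt := T.anc_d_lt h hne
  rw [dir, T.d_iter (by omega)]
  omega

lemma dir_p {u x : V'} (h : T.Anc u x) (hne : u ≠ x) : T.p (T.dir u x) = u := by
  have hlt := T.anc_d_lt h hne
  have harith : T.d x - T.d u = (T.d x - T.d u - 1) + 1 := by omega
  have h2 := T.anc_iter_eq h
  rw [harith, Function.iterate_succ_apply'] at h2
  exact h2

lemma dir_ne {u x : V'} (h : T.Anc u x) (hne : u ≠ x) : T.dir u x ≠ u := by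
  intro he
  have := T.dir_d h hne
  rw [he] at this
  omega

lemma dir_eq {u w x : V'} (h1 : T.Anc u w) (hne : u ≠ w) (h2 : T.Anc w x) :
    T.dir u x = T.dir u w := by
  have hlt := T.anc_d_lt h1 hne
  have hle := T.anc_d_le h2
  have harith : T.d x - T.d u - 1 = (T.d w - T.d u - 1) + (T.d x - T.d w) := by omega
  rw [dir, dir, harith, Function.iterate_add_apply, T.anc_iter_eq h2]

lemma dir_self_of_p {c u x : V'} (hc : T.p c = u) (hd : T.d c = T.d u + 1) (h : T.Anc c x) :
    T.dir u x = c := by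
  have key : ∀ y : V', T.d y = T.d u + 1 → T.dir u y = y := by
    intro y hy
    rw [dir]
    have h0 : T.d y - T.d u - 1 = 0 := by omega
    rw [h0]
    rfl
  by_cases hcx : c = x
  · subst hcx
    exact key _ hd
  · rw [T.dir_eq ⟨1, by simpa using hc⟩ (by intro he; rw [← he] at hd; omega) h]
    exact key _ hd

/-- The walk from `x` up to its `n`-th iterated parent. -/
def chainW : (n : ℕ) → (x : V') → n ≤ T.d x → H.Walk x (T.p^[n] x)
  | 0, _, _ => SimpleGraph.Walk.nil
  | n+1, x, h =>
    SimpleGraph.Walk.cons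
      ((T.adj x (fun hx => by rw [hx, T.hdr] at h; omega)).symm)
      (chainW n (T.p x)
        (by
          have := T.hd x (fun hx => by rw [hx, T.hdr] at h; omega)
          omega))

lemma chainW_length (n : ℕ) (x : V') (h : n ≤ T.d x) : (T.chainW n x h).length = n := by
  induction n generalizing x with
  | zero => rfl
  | succ n ih => simp [chainW, ih]

lemma mem_chainW_support {n : ℕ} {x z : V'} {h : n ≤ T.d x} :
    z ∈ (T.chainW n x h).support ↔ ∃ i, i ≤ n ∧ T.p^[i] x = z := by
  induction n generalizing x with
  | zero =>
    simp only [chainW, SimpleGraph.Walk.support_nil, List.mem_singleton]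
    show z ∈ [x] ↔ ∃ i, i ≤ 0 ∧ T.p^[i] x = z
    rw [List.mem_singleton]
    constructor
    · rintro rfl; exact ⟨0, le_refl _, rfl⟩
    · rintro ⟨i, hi, rfl⟩
      simp [Nat.le_zero.mp hi]
  | succ n ih =>
    simp only [chainW, SimpleGraph.Walk.support_cons, List.mem_cons]
    show z ∈ x :: (T.chainW n (T.p x) _).support ↔ ∃ i, i ≤ n + 1 ∧ T.p^[i] x = z
    rw [List.mem_cons, ih]
    constructor
    · rintro (rfl | ⟨i, hi, rfl⟩)
      · exact ⟨0, by omega, rfl⟩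
      · exact ⟨i + 1, by omega, by rw [Function.iterate_succ_apply]⟩
    · rintro ⟨i, hi, rfl⟩
      match i with
      | 0 => left; rfl
      | Nat.succ j =>
        right
        exact ⟨j, by omega, by rw [Function.iterate_succ_apply]⟩

lemma chainW_isPath (n : ℕ) (x : V') (h : n ≤ T.d x) : (T.chainW n x h).IsPath := by
  induction n generalizing x with
  | zero => exact SimpleGraph.Walk.IsPath.nil
  | succ n ih =>
    refine SimpleGraph.Walk.IsPath.cons (ih _ _) ?_
    rw [T.mem_chainW_support]
    rintro ⟨i, hi, hz⟩
    have hxr : x ≠ T.r := fun hx => by rw [hx, T.hdr] at h; omega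
    have hdp := T.hd x hxr
    have : T.d (T.p^[i] (T.p x)) = T.d (T.p x) - i := T.d_iter (by omega)
    rw [hz] at this
    omega

/-- The walk from `x` up to an ancestor `u`. -/
def chainTo {u x : V'} (h : T.Anc u x) : H.Walk x u :=
  (T.chainW (T.d x - T.d u) x (by omega)).copy rfl (T.anc_iter_eq h)

lemma chainTo_length {u x : V'} (h : T.Anc u x) : (T.chainTo h).length = T.d x - T.d u := by
  rw [chainTo, SimpleGraph.Walk.length_copy, T.chainW_length]

lemma chainTo_isPath {u x : V'} (h : T.Anc u x) : (T.chainTo h).IsPath := by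
  rw [chainTo, SimpleGraph.Walk.isPath_copy]
  exact T.chainW_isPath _ _ _

lemma mem_chainTo {u x z : V'} (h : T.Anc u x) :
    z ∈ (T.chainTo h).support ↔ (T.Anc u z ∧ T.Anc z x) := by
  rw [chainTo, SimpleGraph.Walk.support_copy, T.mem_chainW_support]
  have hle := T.anc_d_le h
  constructor
  · rintro ⟨i, hi, rfl⟩
    refine ⟨?_, ⟨i, rfl⟩⟩
    refine ⟨(T.d x - T.d u) - i, ?_⟩
    rw [← Function.iterate_add_apply]
    have harith : T.d x - T.d u - i + i = T.d x - T.d u := by omega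
    rw [harith, T.anc_iter_eq h]
  · rintro ⟨h1, h2⟩
    refine ⟨T.d x - T.d z, ?_, T.anc_iter_eq h2⟩
    have := T.anc_d_le h1
    omega

open Classical in
/-- The set of child-directions of `u` towards elements of `X`. -/
noncomputable def dirs (X : Finset V') (u : V') : Finset V' :=
  (X.filter (fun x => T.Anc u x ∧ x ≠ u)).image (T.dir u)

open Classical in
/-- The teeth of the chain from `x` to `u`. -/
noncomputable def teeth (X : Finset V') (u x : V') : Finset V' :=
  ((Finset.range (T.d x - T.d u + 1)).image (fun i => T.p^[i] x)).filter
    (fun y => y ∈ X ∨ ∃ z ∈ X, T.Anc y z ∧ z ≠ y ∧ T.dir y z ≠ T.dir y x)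

lemma self_mem_teeth {X : Finset V'} {u x : V'} (hx : x ∈ X) : x ∈ T.teeth X u x := by
  classical
  rw [teeth, Finset.mem_filter]
  constructor
  · simp only [Finset.mem_image, Finset.mem_range]
    exact ⟨0, by omega, rfl⟩
  · exact Or.inl hx

lemma mem_teeth_anc {X : Finset V'} {u x y : V'} (hy : y ∈ T.teeth X u x)
    (hux : T.Anc u x) : T.Anc y x ∧ T.d u ≤ T.d y := by
  classical
  have hle := T.anc_d_le hux
  rw [teeth, Finset.mem_filter, Finset.mem_image] at hy
  obtain ⟨⟨i, hi, rfl⟩, _⟩ := hy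
  simp only [Finset.mem_range] at hi
  have hid : i ≤ T.d x := by omega
  have := T.d_iter (u := x) hid
  exact ⟨⟨i, rfl⟩, by omega⟩

lemma mem_teeth_cond {X : Finset V'} {u x y : V'} (hy : y ∈ T.teeth X u x) :
    y ∈ X ∨ ∃ z ∈ X, T.Anc y z ∧ z ≠ y ∧ T.dir y z ≠ T.dir y x := by
  classical
  rw [teeth, Finset.mem_filter] at hy
  exact hy.2

lemma teeth_mono {X : Finset V'} {u c x : V'} (h : T.d u ≤ T.d c) :
    T.teeth X c x ⊆ T.teeth X u x := by
  classical
  intro y hy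
  rw [teeth, Finset.mem_filter] at hy ⊢
  refine ⟨?_, hy.2⟩
  obtain ⟨i, hi, hiy⟩ := Finset.mem_image.mp hy.1
  simp only [Finset.mem_range] at hi
  exact Finset.mem_image.mpr ⟨i, Finset.mem_range.mpr (by omega), hiy⟩

open Classical in
lemma count {X : Finset V'} {s : ℕ}
    (hA : ∀ u : V', (T.dirs X u).card < s) :
    ∀ (D : ℕ) (u : V') (t : ℕ),
    (∀ x ∈ X, T.Anc u x → T.d x - T.d u ≤ D) →
    (∀ x ∈ X, T.Anc u x → (T.teeth X u x).card ≤ t) →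
    (X.filter (fun x => T.Anc u x)).card ≤ (s+2)^t - 1 := by
  classical
  intro D
  induction D with
  | zero =>
    intro u t hD ht
    have hsub : X.filter (fun x => T.Anc u x) ⊆ {u} := by
      intro x hx
      rw [Finset.mem_filter] at hx
      have h0 : T.d x - T.d u = 0 := by
        have := hD x hx.1 hx.2
        omega
      have := T.anc_iter_eq hx.2
      rw [h0] at this
      simp only [Function.iterate_zero_apply] at this
      simp [this]
    by_cases hne : (X.filter (fun x => T.Anc u x)).Nonempty
    · obtain ⟨x, hx⟩ := hne
      rw [Finset.mem_filter] at hx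
      have ht1 : 1 ≤ t := by
        have h1 := ht x hx.1 hx.2
        have h2 : x ∈ T.teeth X u x := T.self_mem_teeth hx.1
        have := Finset.card_pos.mpr ⟨x, h2⟩
        omega
      have hcard := Finset.card_le_card hsub
      simp only [Finset.card_singleton] at hcard
      have hs1 : 1 ≤ s := by
        have := hA u
        omega
      have hpow : (s+2)^1 ≤ (s+2)^t := Nat.pow_le_pow_right (by omega) ht1
      simp only [pow_one] at hpow
      omega
    · rw [Finset.not_nonempty_iff_eq_empty] at hne
      rw [hne]
      simp
  | succ D ih =>
    intro u t hD ht
    by_cases hne : (X.filter (fun x => T.Anc u x)).Nonempty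
    swap
    · rw [Finset.not_nonempty_iff_eq_empty] at hne
      rw [hne]
      simp
    obtain ⟨x₀, hx₀⟩ := hne
    rw [Finset.mem_filter] at hx₀
    have ht1 : 1 ≤ t := by
      have h1 := ht x₀ hx₀.1 hx₀.2
      have h2 : x₀ ∈ T.teeth X u x₀ := T.self_mem_teeth hx₀.1
      have := Finset.card_pos.mpr ⟨x₀, h2⟩
      omega
    have hs1 : 1 ≤ s := by have := hA u; omega
    set C := T.dirs X u with hC
    -- facts about c ∈ C
    have hcfact : ∀ c ∈ C, T.p c = u ∧ T.d c = T.d u + 1 := by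
      intro c hc
      rw [hC, dirs, Finset.mem_image] at hc
      obtain ⟨x, hx, rfl⟩ := hc
      rw [Finset.mem_filter] at hx
      exact ⟨T.dir_p hx.2.1 (Ne.symm hx.2.2), T.dir_d hx.2.1 (Ne.symm hx.2.2)⟩
    have hdirc : ∀ c ∈ C, ∀ x ∈ X, T.Anc c x → T.dir u x = c := by
      intro c hc x hx hcx
      obtain ⟨hpc, hdc⟩ := hcfact c hc
      exact T.dir_self_of_p hpc hdc hcx
    have hancuc : ∀ c ∈ C, T.Anc u c := by
      intro c hc
      obtain ⟨hpc, _⟩ := hcfact c hc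
      exact ⟨1, by simpa using hpc⟩
    -- main subset
    have hsub : X.filter (fun x => T.Anc u x) ⊆
        insert u (C.biUnion (fun c => X.filter (fun x => T.Anc c x))) := by
      intro x hx
      rw [Finset.mem_filter] at hx
      by_cases hxu : x = u
      · simp [hxu]
      · refine Finset.mem_insert_of_mem (Finset.mem_biUnion.mpr ⟨T.dir u x, ?_, ?_⟩)
        · rw [hC, dirs, Finset.mem_image]
          exact ⟨x, Finset.mem_filter.mpr ⟨hx.1, hx.2, hxu⟩, rfl⟩
        · exact Finset.mem_filter.mpr ⟨hx.1, T.dir_anc⟩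
    -- depth and teeth bounds for children
    have hDc : ∀ c ∈ C, ∀ x ∈ X, T.Anc c x → T.d x - T.d c ≤ D := by
      intro c hc x hx hcx
      obtain ⟨_, hdc⟩ := hcfact c hc
      have h1 : T.Anc u x := T.anc_trans (hancuc c hc) hcx
      have := hD x hx h1
      have := T.anc_d_le hcx
      omega
    have htc : ∀ c ∈ C, ∀ x ∈ X, T.Anc c x → (T.teeth X c x).card ≤ t := by
      intro c hc x hx hcx
      obtain ⟨_, hdc⟩ := hcfact c hc
      have hsubt : T.teeth X c x ⊆ T.teeth X u x := T.teeth_mono (by omega)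
      have := ht x hx (T.anc_trans (hancuc c hc) hcx)
      have := Finset.card_le_card hsubt
      omega
    by_cases hcase : u ∈ X ∨ 2 ≤ C.card
    · -- u is a tooth for every x below a child: budget decreases
      have htc' : ∀ c ∈ C, ∀ x ∈ X, T.Anc c x → (T.teeth X c x).card ≤ t - 1 := by
        intro c hc x hx hcx
        obtain ⟨hpc, hdc⟩ := hcfact c hc
        have hux : T.Anc u x := T.anc_trans (hancuc c hc) hcx
        have hxu : x ≠ u := by
          intro he
          have := T.anc_d_le hcx
          rw [he] at this
          omega
        have hut : u ∈ T.teeth X u x := by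
          rw [teeth, Finset.mem_filter]
          constructor
          · rw [Finset.mem_image]
            refine ⟨T.d x - T.d u, Finset.mem_range.mpr (by omega), T.anc_iter_eq hux⟩
          · rcases hcase with h | h
            · exact Or.inl h
            · have h2C : (1:ℕ) < C.card := by omega
              obtain ⟨c', hc', hcc'⟩ := Finset.exists_mem_ne h2C c
              right
              rw [hC, dirs, Finset.mem_image] at hc'
              obtain ⟨z, hz, rfl⟩ := hc'
              rw [Finset.mem_filter] at hz
              refine ⟨z, hz.1, hz.2.1, hz.2.2, ?_⟩
              rw [hdirc c hc x hx hcx]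
              exact hcc'
        have hunt : u ∉ T.teeth X c x := by
          intro hu
          have := (T.mem_teeth_anc hu hcx).2
          omega
        have hsubt : T.teeth X c x ⊆ (T.teeth X u x).erase u := by
          intro y hy
          exact Finset.mem_erase.mpr ⟨fun he => hunt (he ▸ hy), T.teeth_mono (by omega) hy⟩
        have h1 := Finset.card_le_card hsubt
        have h2 : ((T.teeth X u x).erase u).card = (T.teeth X u x).card - 1 :=
          Finset.card_erase_of_mem hut
        have h3 := ht x hx hux
        omega
      have hbound : ∀ c ∈ C, (X.filter (fun x => T.Anc c x)).card ≤ (s+2)^(t-1) - 1 := by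
        intro c hc
        exact ih c (t-1) (hDc c hc) (htc' c hc)
      have hcard := Finset.card_le_card hsub
      have h2 : (insert u (C.biUnion (fun c => X.filter (fun x => T.Anc c x)))).card ≤
          1 + C.card * ((s+2)^(t-1) - 1) := by
        calc (insert u (C.biUnion (fun c => X.filter (fun x => T.Anc c x)))).card
            ≤ 1 + (C.biUnion (fun c => X.filter (fun x => T.Anc c x))).card := by
              have := Finset.card_insert_le u (C.biUnion (fun c => X.filter (fun x => T.Anc c x)))
              omega
          _ ≤ 1 + C.card * ((s+2)^(t-1) - 1) := by
              have hb1 : (C.biUnion fun c => X.filter (fun x => T.Anc c x)).card ≤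
                  ∑ c ∈ C, (X.filter (fun x => T.Anc c x)).card := Finset.card_biUnion_le
              have hsum : (∑ c ∈ C, (X.filter (fun x => T.Anc c x)).card) ≤
                  C.card * ((s+2)^(t-1) - 1) := by
                calc (∑ c ∈ C, (X.filter (fun x => T.Anc c x)).card)
                    ≤ ∑ _c ∈ C, ((s+2)^(t-1) - 1) := Finset.sum_le_sum hbound
                  _ = C.card * ((s+2)^(t-1) - 1) := by
                      rw [Finset.sum_const, smul_eq_mul]
              omega
      -- arithmetic
      have harith : 1 + C.card * ((s+2)^(t-1) - 1) ≤ (s+2)^t - 1 := by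
        have hct : (s+2)^t = (s+2)^(t-1) * (s+2) := by
          rw [← pow_succ]
          congr 1
          omega
        have hpos : 0 < (s+2)^(t-1) := Nat.pow_pos (by omega)
        have hCs : C.card ≤ s - 1 := by
          have h5 := hA u
          rw [← hC] at h5
          omega
        rw [hct]
        obtain ⟨B, hB⟩ : ∃ B, (s+2)^(t-1) = B + 1 := ⟨(s+2)^(t-1) - 1, by omega⟩
        rw [hB]
        simp only [Nat.add_sub_cancel]
        have e0 : C.card * B ≤ (s-1) * B := Nat.mul_le_mul_right B hCs
        have e1 : (s-1) * B ≤ s * B := Nat.mul_le_mul_right B (Nat.sub_le s 1)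
        have e2 : (B+1) * (s+2) = s*B + 2*B + s + 2 := by ring
        omega
      omega
    · -- u ∉ X and C.card ≤ 1
      push_neg at hcase
      obtain ⟨hunX, hC1⟩ := hcase
      haveI : Nonempty V' := ⟨u⟩
      rcases Finset.card_le_one_iff_subset_singleton.mp
        (show C.card ≤ 1 by omega) with ⟨c, hcsub⟩
      by_cases hcC : c ∈ C
      · have hsub2 : X.filter (fun x => T.Anc u x) ⊆ X.filter (fun x => T.Anc c x) := by
          intro x hx
          rw [Finset.mem_filter] at hx ⊢
          have hxu : x ≠ u := fun he => hunX (he ▸ hx.1)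
          have hdm : T.dir u x ∈ C := by
            rw [hC, dirs, Finset.mem_image]
            exact ⟨x, Finset.mem_filter.mpr ⟨hx.1, hx.2, hxu⟩, rfl⟩
          have : T.dir u x = c := by
            have := hcsub hdm
            simpa using this
          exact ⟨hx.1, this ▸ T.dir_anc⟩
        have := ih c t (hDc c hcC) (htc c hcC)
        have := Finset.card_le_card hsub2
        omega
      · -- C = ∅ : the filter is empty
        have hCe : C = ∅ := by
          rcases Finset.eq_empty_or_nonempty C with h | h
          · exact h
          · obtain ⟨c', hc'⟩ := h
            have := hcsub hc'
            simp only [Finset.mem_singleton] at this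
            exact absurd (this ▸ hc') hcC
        exfalso
        have hxu : x₀ ≠ u := fun he => hunX (he ▸ hx₀.1)
        have : T.dir u x₀ ∈ C := by
          rw [hC, dirs, Finset.mem_image]
          exact ⟨x₀, Finset.mem_filter.mpr ⟨hx₀.1, hx₀.2, hxu⟩, rfl⟩
        rw [hCe] at this
        simp at this

open Classical in
theorem star_or_comb (X : Finset V') (s : ℕ) (hs : 0 < s) (hX : (s+2)^s ≤ X.card) :
    (∃ u, ∃ g : Fin s → V', (∀ i, g i ∈ X) ∧ (∀ i, T.Anc u (g i) ∧ g i ≠ u) ∧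
      ∀ i j, i ≠ j → T.dir u (g i) ≠ T.dir u (g j)) ∨
    (∃ x, x ∈ X ∧ ∃ y z : Fin s → V',
      y ⟨0, hs⟩ = x ∧ (∀ i, T.Anc (y i) x) ∧ (∀ i j : Fin s, i < j → T.d (y j) < T.d (y i)) ∧
      (∀ i, z i ∈ X) ∧ (∀ i, T.Anc (y i) (z i)) ∧
      (∀ i, z i ≠ y i → T.dir (y i) (z i) ≠ T.dir (y i) x)) := by
  by_cases hA : ∃ u, s ≤ (T.dirs X u).card
  · left
    obtain ⟨u, hu⟩ := hA
    obtain ⟨sub, hsub, hcard⟩ := Finset.exists_subset_card_eq hu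
    have hmem : ∀ i : Fin s,
        ((sub.equivFin.symm (Fin.cast hcard.symm i)) : {a // a ∈ sub}).1 ∈ T.dirs X u :=
      fun i => hsub (sub.equivFin.symm (Fin.cast hcard.symm i)).2
    have hch : ∀ i : Fin s, ∃ x, (x ∈ X ∧ T.Anc u x ∧ x ≠ u) ∧
        T.dir u x = ((sub.equivFin.symm (Fin.cast hcard.symm i)) : {a // a ∈ sub}).1 := by
      intro i
      have := hmem i
      rw [dirs, Finset.mem_image] at this
      obtain ⟨x, hx, hdx⟩ := this
      rw [Finset.mem_filter] at hx
      exact ⟨x, ⟨hx.1, hx.2.1, hx.2.2⟩, hdx⟩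
    refine ⟨u, fun i => (hch i).choose, fun i => ((hch i).choose_spec).1.1,
      fun i => ⟨((hch i).choose_spec).1.2.1, ((hch i).choose_spec).1.2.2⟩, ?_⟩
    intro i j hij hd
    rw [((hch i).choose_spec).2, ((hch j).choose_spec).2] at hd
    have h1 : sub.equivFin.symm (Fin.cast hcard.symm i) =
        sub.equivFin.symm (Fin.cast hcard.symm j) := Subtype.ext hd
    have h2 := sub.equivFin.symm.injective h1
    have h3 := congrArg Fin.val h2
    have h4 : (i : ℕ) = (j : ℕ) := h3
    exact hij (Fin.val_injective h4)
  · push_neg at hA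
    by_cases hB : ∃ x ∈ X, s ≤ (T.teeth X T.r x).card
    · right
      obtain ⟨x, hxX, hx⟩ := hB
      set Tx := T.teeth X T.r x with hTx
      have hancx : ∀ y ∈ Tx, T.Anc y x := by
        intro y hy
        exact (T.mem_teeth_anc hy (T.anc_root x)).1
      have hdinj : Set.InjOn T.d Tx := by
        intro a ha b hb hab
        rcases T.anc_total (hancx a ha) (hancx b hb) with h | h
        · exact T.anc_eq_of_d_eq h hab
        · exact (T.anc_eq_of_d_eq h hab.symm).symm
      set J := Tx.image T.d with hJ
      have hJcard : J.card = Tx.card := Finset.card_image_of_injOn hdinj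
      have hsJ : s ≤ J.card := by omega
      have hd_le : ∀ m ∈ J, m ≤ T.d x := by
        intro m hm
        rw [hJ, Finset.mem_image] at hm
        obtain ⟨a, ha, rfl⟩ := hm
        exact T.anc_d_le (hancx a ha)
      have hdxJ : T.d x ∈ J := by
        rw [hJ, Finset.mem_image]
        exact ⟨x, T.self_mem_teeth hxX, rfl⟩
      set iso := J.orderIsoOfFin rfl with hiso
      have hyv : ∀ j : Fin s, (J.card - 1 - (j:ℕ)) < J.card := by
        intro j
        have := j.2
        omega
      set yv : Fin s → ℕ := fun j => (iso ⟨J.card - 1 - (j:ℕ), hyv j⟩ : ℕ) with hyvdef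
      have hyvJ : ∀ j, yv j ∈ J := fun j => (iso ⟨_, hyv j⟩).2
      have hyvmono : ∀ i j : Fin s, i < j → yv j < yv i := by
        intro i j hij
        have hlt : (⟨J.card - 1 - (j:ℕ), hyv j⟩ : Fin J.card) < ⟨J.card - 1 - (i:ℕ), hyv i⟩ := by
          rw [Fin.mk_lt_mk]
          have hi := i.2
          have hj := j.2
          have hij' : (i:ℕ) < (j:ℕ) := hij
          omega
        exact iso.strictMono hlt
      have hyv0 : yv ⟨0, hs⟩ = T.d x := by
        refine le_antisymm (hd_le _ (hyvJ ⟨0, hs⟩)) ?_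
        have h1 : T.d x = (iso (iso.symm ⟨T.d x, hdxJ⟩) : ℕ) := by rw [OrderIso.apply_symm_apply]
        rw [h1]
        have hle : iso.symm ⟨T.d x, hdxJ⟩ ≤
            (⟨J.card - 1 - ((⟨0, hs⟩ : Fin s):ℕ), hyv ⟨0, hs⟩⟩ : Fin J.card) := by
          have h2 := (iso.symm ⟨T.d x, hdxJ⟩).2
          rw [Fin.le_def]
          show (iso.symm ⟨T.d x, hdxJ⟩ : Fin J.card).val ≤ J.card - 1 - ((⟨0, hs⟩ : Fin s) : ℕ)
          have h0 : ((⟨0, hs⟩ : Fin s) : ℕ) = 0 := rfl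
          omega
        have := iso.monotone hle
        exact_mod_cast this
      have hych : ∀ j : Fin s, ∃ a, a ∈ Tx ∧ T.d a = yv j := by
        intro j
        have := hyvJ j
        rw [hJ, Finset.mem_image] at this
        obtain ⟨a, ha, hda⟩ := this
        exact ⟨a, ha, hda⟩
      set y : Fin s → V' := fun j => (hych j).choose with hydef
      have hyTx : ∀ j, y j ∈ Tx := fun j => ((hych j).choose_spec).1
      have hyd : ∀ j, T.d (y j) = yv j := fun j => ((hych j).choose_spec).2
      have hyanc : ∀ j, T.Anc (y j) x := fun j => hancx _ (hyTx j)
      have hy0 : y ⟨0, hs⟩ = x := by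
        apply T.anc_eq_of_d_eq (hyanc ⟨0, hs⟩)
        rw [hyd ⟨0, hs⟩, hyv0]
      have hzch : ∀ j : Fin s, ∃ z, z ∈ X ∧ T.Anc (y j) z ∧
          (z ≠ y j → T.dir (y j) z ≠ T.dir (y j) x) := by
        intro j
        rcases T.mem_teeth_cond (hyTx j) with h | h
        · exact ⟨y j, h, T.anc_refl _, fun hne => absurd rfl hne⟩
        · obtain ⟨z, hz1, hz2, hz3, hz4⟩ := h
          exact ⟨z, hz1, hz2, fun _ => hz4⟩
      refine ⟨x, hxX, y, fun j => (hzch j).choose, hy0, hyanc, ?_, ?_, ?_, ?_⟩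
      · intro i j hij
        rw [hyd i, hyd j]
        exact hyvmono i j hij
      · exact fun j => ((hzch j).choose_spec).1
      · exact fun j => ((hzch j).choose_spec).2.1
      · exact fun j => ((hzch j).choose_spec).2.2
    · exfalso
      push_neg at hB
      have hBcount : ∀ x ∈ X, T.Anc T.r x → (T.teeth X T.r x).card ≤ s - 1 := by
        intro x hx _
        have := hB x hx
        omega
      have hDb : ∀ x ∈ X, T.Anc T.r x → T.d x - T.d T.r ≤ X.sup T.d := by
        intro x hx _
        have := Finset.le_sup (f := T.d) hx
        omega
      have hcount := T.count hA (X.sup T.d) T.r (s-1) hDb hBcount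
      have hfilter : X.filter (fun x => T.Anc T.r x) = X := by
        apply Finset.filter_true_of_mem
        intro x _
        exact T.anc_root x
      rw [hfilter] at hcount
      have hmono : (s+2)^(s-1) ≤ (s+2)^s := Nat.pow_le_pow_right (by omega) (by omega)
      have hpos : 0 < (s+2)^(s-1) := Nat.pow_pos (by omega)
      omega

end PTree

section Construct

variable {V : Type} {G : SimpleGraph V} {S' : Set V}

/-- The inclusion homomorphism from an induced subgraph. -/
abbrev incl (G : SimpleGraph V) (S' : Set V) : G.induce S' →g G :=
  ⟨Subtype.val, fun h => by simpa using h⟩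

lemma incl_apply (a : ↥S') : (incl G S') a = a.1 := rfl

lemma mem_support_map {a b : ↥S'} (w : (G.induce S').Walk a b) (x : V) :
    x ∈ (w.map (incl G S')).support ↔ ∃ c : ↥S', c ∈ w.support ∧ c.1 = x := by
  rw [SimpleGraph.Walk.support_map, List.mem_map]
  simp [incl_apply]

lemma v_not_mem_support_map {v : V} (hv : v ∉ S') {a b : ↥S'} (w : (G.induce S').Walk a b) :
    v ∉ (w.map (incl G S')).support := by
  rw [mem_support_map]
  rintro ⟨c, _, rfl⟩
  exact hv c.2

lemma map_isPath {a b : ↥S'} {w : (G.induce S').Walk a b} (hw : w.IsPath) :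
    (w.map (incl G S')).IsPath :=
  SimpleGraph.Walk.map_isPath_of_injective (fun _ _ h => Subtype.ext h) hw

/-- From a star (in the BFS tree of the induced graph on `S'`) with `s` leaves adjacent
to `v`, build a dipole subdivision. -/
noncomputable def dipoleOfStar (T : PTree ↥S' (G.induce S')) {v : V} (hv : v ∉ S')
    {s : ℕ} (u : ↥S') (g : Fin s → ↥S')
    (hadj : ∀ i, G.Adj v (g i).1)
    (hanc : ∀ i, T.Anc u (g i) ∧ g i ≠ u)
    (hdir : ∀ i j, i ≠ j → T.dir u (g i) ≠ T.dir u (g j)) :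
    DipoleSubdivision G v u.1 s where
  path := fun i => SimpleGraph.Walk.cons (hadj i) ((T.chainTo (hanc i).1).map (incl G S'))
  isPath := by
    intro i
    rw [SimpleGraph.Walk.cons_isPath_iff]
    exact ⟨map_isPath (T.chainTo_isPath _), v_not_mem_support_map hv _⟩
  len := by
    intro i
    simp only [SimpleGraph.Walk.length_cons, SimpleGraph.Walk.length_map]
    rw [T.chainTo_length]
    have := T.anc_d_lt (hanc i).1 (Ne.symm (hanc i).2)
    omega
  disj := by
    intro i j hij
    ext w
    simp only [Set.mem_inter_iff, Set.mem_setOf_eq, SimpleGraph.Walk.support_cons,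
      List.mem_cons, Set.mem_insert_iff, Set.mem_singleton_iff]
    constructor
    · rintro ⟨hwi, hwj⟩
      rcases hwi with rfl | hwi
      · exact Or.inl rfl
      rcases hwj with rfl | hwj
      · exact Or.inl rfl
      rw [mem_support_map] at hwi hwj
      obtain ⟨a, ha, rfl⟩ := hwi
      obtain ⟨b, hb, hba⟩ := hwj
      have hab : b = a := Subtype.ext hba
      subst hab
      rw [T.mem_chainTo] at ha hb
      right
      by_cases hbu : b = u
      · rw [hbu]
      · exfalso
        have h1 : T.dir u (g i) = T.dir u b := T.dir_eq ha.1 (Ne.symm hbu) ha.2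
        have h2 : T.dir u (g j) = T.dir u b := T.dir_eq hb.1 (Ne.symm hbu) hb.2
        exact hdir i j hij (h1.trans h2.symm)
    · rintro (rfl | rfl)
      · exact ⟨Or.inl rfl, Or.inl rfl⟩
      · constructor
        · right
          rw [mem_support_map]
          exact ⟨u, SimpleGraph.Walk.end_mem_support _, rfl⟩
        · right
          rw [mem_support_map]
          exact ⟨u, SimpleGraph.Walk.end_mem_support _, rfl⟩

lemma spoke_chain_disj {V' : Type} {H : SimpleGraph V'} (T : PTree V' H) {x a : V'}
    {yi yj zi zj : V'}
    (hyi : T.Anc yi x) (hd : T.d yj < T.d yi)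
    (hyj : T.Anc yj x)
    (hdirj : zj ≠ yj → T.dir yj zj ≠ T.dir yj x)
    (h1 : T.Anc yi a) (h2 : T.Anc a zi) (h3 : T.Anc yj a) (h4 : T.Anc a zj) : False := by
  have hd1 : T.d yi ≤ T.d a := T.anc_d_le h1
  have hne : yj ≠ a := by
    intro he
    rw [← he] at hd1
    omega
  have hyij : yj ≠ yi := by
    intro he
    rw [he] at hd
    omega
  have hancji : T.Anc yj yi := by
    rcases T.anc_total hyi hyj with h | h
    · have := T.anc_d_le h
      omega
    · exact h
  by_cases hz : zj = yj
  · rw [hz] at h4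
    have := T.anc_d_le h4
    omega
  · have e1 : T.dir yj zj = T.dir yj a := T.dir_eq h3 hne h4
    have e2 : T.dir yj a = T.dir yj yi := T.dir_eq hancji hyij h1
    have e3 : T.dir yj x = T.dir yj yi := T.dir_eq hancji hyij hyi
    exact hdirj hz (by rw [e1, e2, ← e3])

lemma spoke_chain_x_disj {V' : Type} {H : SimpleGraph V'} (T : PTree V' H) {x a : V'}
    {yi zi : V'}
    (hyi : T.Anc yi x)
    (hdiri : zi ≠ yi → T.dir yi zi ≠ T.dir yi x)
    (h1 : T.Anc yi a) (hne : a ≠ yi) (h2 : T.Anc a zi) (hax : T.Anc a x) : False := by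
  by_cases hz : zi = yi
  · rw [hz] at h2
    have hd1 : T.d yi ≤ T.d a := T.anc_d_le h1
    have hd2 : T.d a ≤ T.d yi := T.anc_d_le h2
    exact hne (T.anc_eq_of_d_eq h1 (by omega)).symm
  · have e1 : T.dir yi zi = T.dir yi a := T.dir_eq h1 (Ne.symm hne) h2
    have e2 : T.dir yi x = T.dir yi a := T.dir_eq h1 (Ne.symm hne) hax
    exact hdiri hz (by rw [e1, ← e2])

/-- From a comb (in the BFS tree of the induced graph on `S'`) with `s` teeth adjacent
to `v`, build a fan subdivision with center `v`. -/
noncomputable def fanOfComb (T : PTree ↥S' (G.induce S')) {v : V} (hv : v ∉ S')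
    {s : ℕ} (hs : 0 < s) (x : ↥S') (y z : Fin s → ↥S')
    (hyanc : ∀ i, T.Anc (y i) x)
    (hymono : ∀ i j : Fin s, i < j → T.d (y j) < T.d (y i))
    (hzadj : ∀ i, G.Adj v (z i).1)
    (hzanc : ∀ i, T.Anc (y i) (z i))
    (hzdir : ∀ i, z i ≠ y i → T.dir (y i) (z i) ≠ T.dir (y i) x) :
    FanSubdivision G v s := by
  have hdne : ∀ i j : Fin s, i ≠ j → T.d (y i) ≠ T.d (y j) := by
    intro i j hij
    rcases lt_trichotomy i j with h | h | h
    · have := hymono i j h; omega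
    · exact absurd h hij
    · have := hymono j i h; omega
  have hanc_of_lt : ∀ i j : Fin s, T.d (y j) < T.d (y i) → T.Anc (y j) (y i) := by
    intro i j hd
    rcases T.anc_total (hyanc i) (hyanc j) with h | h
    · have := T.anc_d_le h; omega
    · exact h
  have hsucc : ∀ (i : Fin s) (h : (i:ℕ)+1 < s), T.Anc (y ⟨(i:ℕ)+1, h⟩) (y i) := by
    intro i h
    apply hanc_of_lt
    apply hymono
    rw [Fin.lt_def]
    show (i:ℕ) < (i:ℕ)+1
    omega
  refine
    { b := fun i => (y i).1
      binj := ?_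
      bne := fun i h => hv (h ▸ (y i).2)
      spoke := fun i => SimpleGraph.Walk.cons (hzadj i) ((T.chainTo (hzanc i)).map (incl G S'))
      spokePath := ?_
      seg := fun i h => (T.chainTo (hsucc i h)).map (incl G S')
      segPath := ?_
      vNotinSeg := ?_
      spokeDisj := ?_
      spokeSegDisj := ?_
      segDisj := ?_ }
  · -- binj
    intro i j hij
    by_contra hne
    exact hdne i j hne (congrArg T.d (Subtype.ext hij))
  · -- spokePath
    intro i
    rw [SimpleGraph.Walk.cons_isPath_iff]
    exact ⟨map_isPath (T.chainTo_isPath _), v_not_mem_support_map hv _⟩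
  · -- segPath
    intro i h
    exact map_isPath (T.chainTo_isPath _)
  · -- vNotinSeg
    intro i h
    exact v_not_mem_support_map hv _
  · -- spokeDisj
    intro i j hij
    ext w
    simp only [Set.mem_inter_iff, Set.mem_setOf_eq, SimpleGraph.Walk.support_cons,
      List.mem_cons, Set.mem_singleton_iff]
    constructor
    · rintro ⟨hwi, hwj⟩
      rcases hwi with rfl | hwi
      · rfl
      rcases hwj with rfl | hwj
      · rfl
      exfalso
      rw [mem_support_map] at hwi hwj
      obtain ⟨a, ha, rfl⟩ := hwi
      obtain ⟨b, hb, hba⟩ := hwj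
      have hab : b = a := Subtype.ext hba
      subst hab
      rw [T.mem_chainTo] at ha hb
      have hd : T.d (y i) ≠ T.d (y j) := hdne i j hij
      rcases Nat.lt_or_ge (T.d (y j)) (T.d (y i)) with h | h
      · exact spoke_chain_disj T (hyanc i) h (hyanc j) (hzdir j) ha.1 ha.2 hb.1 hb.2
      · exact spoke_chain_disj T (hyanc j) (by omega) (hyanc i) (hzdir i) hb.1 hb.2 ha.1 ha.2
    · rintro rfl
      exact ⟨Or.inl rfl, Or.inl rfl⟩
  · -- spokeSegDisj
    intro i j h
    intro w hw
    obtain ⟨hw1, hw2⟩ := hw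
    simp only [Set.mem_setOf_eq, SimpleGraph.Walk.support_cons, List.mem_cons] at hw1 hw2
    rcases hw1 with rfl | hw1
    · exact absurd hw2 (v_not_mem_support_map hv _)
    rw [mem_support_map] at hw1 hw2
    obtain ⟨a, ha, rfl⟩ := hw1
    obtain ⟨b, hb, hba⟩ := hw2
    have hab : b = a := Subtype.ext hba
    rw [hab] at hb
    rw [T.mem_chainTo] at ha hb
    have hax : T.Anc a x := T.anc_trans hb.2 (hyanc j)
    by_cases hbyi : a = y i
    · rw [hbyi] at hb ⊢
      have hd1 : T.d (y ⟨(j:ℕ)+1, h⟩) ≤ T.d (y i) := T.anc_d_le hb.1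
      have hd2 : T.d (y i) ≤ T.d (y j) := T.anc_d_le hb.2
      have hij : i = j ∨ i = ⟨(j:ℕ)+1, h⟩ := by
        by_contra hcon
        push_neg at hcon
        have hv1 : (i:ℕ) ≠ (j:ℕ) := fun he => hcon.1 (Fin.ext he)
        have hv2 : (i:ℕ) ≠ (j:ℕ)+1 := fun he => hcon.2 (Fin.ext he)
        rcases Nat.lt_or_ge (i:ℕ) (j:ℕ) with hlt | hge
        · have := hymono i j (by rw [Fin.lt_def]; omega)
          omega
        · have hj1i : ((j:ℕ)+1) < (i:ℕ) := by omega
          have := hymono ⟨(j:ℕ)+1, h⟩ i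
            (by rw [Fin.lt_def]; show (j:ℕ)+1 < (i:ℕ); omega)
          omega
      constructor
      · exact rfl
      · rcases hij with rfl | rfl
        · exact Or.inl rfl
        · exact Or.inr rfl
    · exfalso
      exact spoke_chain_x_disj T (hyanc i) (hzdir i) ha.1 hbyi ha.2 hax
  · -- segDisj
    have key : ∀ (i j : Fin s) (hi : (i:ℕ)+1 < s) (hj : (j:ℕ)+1 < s), (i:ℕ) < (j:ℕ) →
        {a | a ∈ ((T.chainTo (hsucc i hi)).map (incl G S')).support} ∩
          {a | a ∈ ((T.chainTo (hsucc j hj)).map (incl G S')).support} ⊆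
        ({(y i).1, (y ⟨(i:ℕ)+1, hi⟩).1} : Set V) ∩ {(y j).1, (y ⟨(j:ℕ)+1, hj⟩).1} := by
      intro i j hi hj hlt w hw
      obtain ⟨hw1, hw2⟩ := hw
      simp only [Set.mem_setOf_eq] at hw1 hw2
      rw [mem_support_map] at hw1 hw2
      obtain ⟨a, ha, rfl⟩ := hw1
      obtain ⟨b, hb, hba⟩ := hw2
      have hab : b = a := Subtype.ext hba
      rw [hab] at hb
      rw [T.mem_chainTo] at ha hb
      have hd1 : T.d (y ⟨(i:ℕ)+1, hi⟩) ≤ T.d a := T.anc_d_le ha.1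
      have hd2 : T.d a ≤ T.d (y i) := T.anc_d_le ha.2
      have hd3 : T.d (y ⟨(j:ℕ)+1, hj⟩) ≤ T.d a := T.anc_d_le hb.1
      have hd4 : T.d a ≤ T.d (y j) := T.anc_d_le hb.2
      have hjeq : (j:ℕ) = (i:ℕ)+1 := by
        by_contra hcon
        have hlt2 : (i:ℕ)+1 < (j:ℕ) := by omega
        have hfin : (⟨(i:ℕ)+1, hi⟩ : Fin s) < j := by
          rw [Fin.lt_def]
          exact hlt2
        have hmono2 : T.d (y j) < T.d (y ⟨(i:ℕ)+1, hi⟩) := hymono _ _ hfin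
        omega
      have hfj : (⟨(i:ℕ)+1, hi⟩ : Fin s) = j :=
        Fin.ext (show ((⟨(i:ℕ)+1, hi⟩ : Fin s) : ℕ) = (j:ℕ) from hjeq.symm)
      have hdaj : T.d a = T.d (y j) := by
        rw [← hfj] at hd4 ⊢
        omega
      have hayj : a = y j := by
        have haxx : T.Anc a x := T.anc_trans ha.2 (hyanc i)
        rcases T.anc_total haxx (hyanc j) with h | h
        · exact T.anc_eq_of_d_eq h hdaj
        · exact (T.anc_eq_of_d_eq h hdaj.symm).symm
      rw [hayj]
      constructor
      · right
        rw [hfj]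
        rfl
      · left
        rfl
    intro i j hi hj hij
    rcases Nat.lt_trichotomy (i:ℕ) (j:ℕ) with h | h | h
    · exact key i j hi hj h
    · exact absurd (Fin.ext h) hij
    · intro w hw
      obtain ⟨h1, h2⟩ := key j i hj hi h ⟨hw.2, hw.1⟩
      exact ⟨h2, h1⟩

end Construct

section Glue

lemma exists_parent {V' : Type} {H : SimpleGraph V'} (hconn : H.Connected) {r u : V'}
    (h : u ≠ r) :
    ∃ w, H.Adj w u ∧ H.dist r w + 1 = H.dist r u := by
  obtain ⟨wk, hlen⟩ := hconn.exists_walk_length_eq_dist u r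
  cases wk with
  | nil => exact absurd rfl h
  | @cons _ w _ hadj q =>
    refine ⟨w, hadj.symm, ?_⟩
    have h1 : H.dist r w ≤ q.length := by
      rw [SimpleGraph.dist_comm]
      exact SimpleGraph.dist_le q
    have h2 : H.dist u r = q.length + 1 := by
      rw [← hlen]
      simp
    have hd1 : H.dist w u ≤ 1 := by
      have := SimpleGraph.dist_le (SimpleGraph.Walk.cons hadj.symm SimpleGraph.Walk.nil)
      simpa using this
    have h3 : H.dist r u ≤ H.dist r w + H.dist w u := hconn.dist_triangle
    have h4 : H.dist r u = q.length + 1 := by rw [SimpleGraph.dist_comm]; exact h2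
    omega

end Glue


/-- a vertex of large degree inside a block forces a large subdivided fan or
a large subdivided dipole. -/
theorem fan_or_dipole_of_block_degree :
    ∃ f : ℕ → ℕ, ∀ (V : Type) (G : SimpleGraph V) (S : Set V) (v : V) (s : ℕ),
      IsBlock G S → v ∈ S → f s ≤ {w ∈ S | G.Adj v w}.ncard →
      (∃ c : V, Nonempty (FanSubdivision G c s)) ∨
        (∃ a b : V, a ≠ b ∧ Nonempty (DipoleSubdivision G a b s)) := by
  classical
  refine ⟨fun s => (s+2)^s, ?_⟩
  intro V G S v s hblock hvS hcard0
  have hcard : (s+2)^s ≤ {w ∈ S | G.Adj v w}.ncard := hcard0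
  clear hcard0
  rcases Nat.eq_zero_or_pos s with rfl | hs
  · left
    refine ⟨v, ⟨?_⟩⟩
    exact
      { b := Fin.elim0
        binj := fun i => i.elim0
        bne := fun i => i.elim0
        spoke := fun i => i.elim0
        spokePath := fun i => i.elim0
        seg := fun i _ => i.elim0
        segPath := fun i _ => i.elim0
        vNotinSeg := fun i _ => i.elim0
        spokeDisj := fun i _ _ => i.elim0
        spokeSegDisj := fun i _ _ => i.elim0
        segDisj := fun i _ _ _ _ => i.elim0 }
  · set S' := S \ {v} with hS'
    have hvS' : v ∉ S' := fun h => h.2 rfl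
    set X0 := {w ∈ S | G.Adj v w} with hX0
    have hpos : 0 < (s+2)^s := Nat.pow_pos (by omega)
    have hfin : X0.Finite := by
      by_contra hinf
      rw [Set.Infinite.ncard hinf] at hcard
      omega
    have hX0S' : X0 ⊆ S' := by
      rintro w ⟨hwS, hwadj⟩
      exact ⟨hwS, fun he => (hwadj.ne) (Set.mem_singleton_iff.mp he).symm⟩
    set X : Finset ↥S' := hfin.toFinset.subtype (· ∈ S') with hXdef
    have hXmem : ∀ a : ↥S', a ∈ X ↔ a.1 ∈ X0 := by
      intro a
      rw [hXdef, Finset.mem_subtype, Set.Finite.mem_toFinset]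
    have hXcard : X.card = X0.ncard := by
      rw [hXdef, Finset.card_subtype]
      rw [Finset.filter_true_of_mem (fun a ha => hX0S' (hfin.mem_toFinset.mp ha))]
      exact (Set.ncard_eq_toFinset_card X0 hfin).symm
    have hXcard2 : (s+2)^s ≤ X.card := by rw [hXcard]; exact hcard
    have hXne : X.Nonempty := Finset.card_pos.mp (by omega)
    obtain ⟨r, hrX⟩ := hXne
    have hpre : (G.induce S').Preconnected := hblock.2.2.1 v hvS
    haveI : Nonempty ↥S' := ⟨r⟩
    have hconn : (G.induce S').Connected := ⟨hpre⟩
    have hpar : ∀ u : ↥S', u ≠ r → ∃ w, (G.induce S').Adj w u ∧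
        (G.induce S').dist r w + 1 = (G.induce S').dist r u :=
      fun u hu => exists_parent hconn hu
    set T : PTree ↥S' (G.induce S') :=
      { p := fun u => if h : u = r then r else (hpar u h).choose
        d := fun u => (G.induce S').dist r u
        r := r
        hpr := dif_pos rfl
        hdr := SimpleGraph.dist_self
        adj := fun u hu => by
          show (G.induce S').Adj (if h : u = r then r else (hpar u h).choose) u
          rw [dif_neg hu]
          exact ((hpar u hu).choose_spec).1
        hd := fun u hu => by
          show (G.induce S').dist r (if h : u = r then r else (hpar u h).choose) + 1 =
            (G.induce S').dist r u
          rw [dif_neg hu]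
          exact ((hpar u hu).choose_spec).2 } with hT
    have hXadj : ∀ a : ↥S', a ∈ X → G.Adj v a.1 := fun a ha => ((hXmem a).mp ha).2
    rcases T.star_or_comb X s hs hXcard2 with
      ⟨u, g, hg1, hg2, hg3⟩ | ⟨x, _, y, z, _, hyanc, hymono, hz1, hz2, hz3⟩
    · right
      refine ⟨v, u.1, fun he => u.2.2 (Set.mem_singleton_iff.mpr he.symm), ?_⟩
      exact ⟨dipoleOfStar T hvS' u g (fun i => hXadj _ (hg1 i)) hg2 hg3⟩
    · left
      exact ⟨v, ⟨fanOfComb T hvS' hs x y z hyanc hymono (fun i => hXadj _ (hz1 i)) hz2 hz3⟩⟩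
end

section
/- Let G be a graph that excludes the k-fan F_k as a topological minor. Then for every vertex v of G, the rooted treedepth td(G − v, N(v)) is at most C(k,2) = k(k−1)/2, assuming the following lemma: if a graph H has no U-rooted P_k minor, then td(H,U) ≤ C(k,2). -/
open SimpleGraph

private lemma first_hit {W : Type*} {K : SimpleGraph W} [DecidableEq W] {S : Set W}
    [DecidablePred (· ∈ S)] :
    ∀ {p q : W} (_ : K.Walk p q), q ∈ S →
      ∃ c, c ∈ S ∧ ∃ Q : K.Walk p c, Q.IsPath ∧ ∀ x ∈ Q.support, x ∈ S → x = c := by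
  intro p q R
  induction R with
  | nil => intro h; exact ⟨_, h, Walk.nil, Walk.IsPath.nil, fun x hx _ => by simpa using hx⟩
  | @cons a b w hadj R ih =>
    intro hq
    by_cases hp : a ∈ S
    · exact ⟨a, hp, Walk.nil, Walk.IsPath.nil, fun x hx _ => by simpa using hx⟩
    · obtain ⟨c, hcS, Q', hQ', hfirst⟩ := ih hq
      refine ⟨c, hcS, (Walk.cons hadj Q').bypass, Walk.bypass_isPath _, ?_⟩
      intro x hx hxS
      have hx' := Walk.support_bypass_subset _ hx
      rw [Walk.support_cons] at hx'
      rcases List.mem_cons.mp hx' with h | h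
      · exact absurd (h ▸ hxS) hp
      · exact hfirst x h hxS

private lemma steiner_in {W : Type*} {K : SimpleGraph W} (hK : K.Connected) (p q r : W) :
    ∃ c : W, ∃ (Pp : K.Walk c p) (Pq : K.Walk c q) (Pr : K.Walk c r),
      Pp.IsPath ∧ Pq.IsPath ∧ Pr.IsPath ∧
      (∀ x, x ∈ Pp.support → x ∈ Pq.support → x = c) ∧
      (∀ x, x ∈ Pp.support → x ∈ Pr.support → x = c) ∧
      (∀ x, x ∈ Pq.support → x ∈ Pr.support → x = c) := by
  classical
  obtain ⟨P0⟩ := hK.preconnected q r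
  set P := P0.bypass with hPdef
  have hP : P.IsPath := Walk.bypass_isPath _
  obtain ⟨R⟩ := hK.preconnected p q
  obtain ⟨c, hcS, Q, hQ, hfirst⟩ := first_hit (S := {x | x ∈ P.support}) R
    (by simp [Walk.start_mem_support])
  have hcP : c ∈ P.support := hcS
  -- intersection of takeUntil and dropUntil supports is {c}
  have hTD : ∀ x, x ∈ (P.takeUntil c hcP).support → x ∈ (P.dropUntil c hcP).support → x = c := by
    intro x hx1 hx2
    have hspec := P.take_spec hcP
    have hnd : P.support.Nodup := hP.support_nodup
    rw [← hspec, Walk.support_append] at hnd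
    have hdisj := List.disjoint_of_nodup_append hnd
    rw [Walk.support_eq_cons (P.dropUntil c hcP)] at hx2
    rcases List.mem_cons.mp hx2 with h | h
    · exact h
    · exact absurd h (hdisj hx1)
  refine ⟨c, Q.reverse, (P.takeUntil c hcP).reverse, P.dropUntil c hcP,
    hQ.reverse, (hP.takeUntil hcP).reverse, hP.dropUntil hcP, ?_, ?_, ?_⟩
  · intro x hx1 hx2
    rw [Walk.support_reverse, List.mem_reverse] at hx1 hx2
    exact hfirst x hx1 (Walk.support_takeUntil_subset _ _ hx2)
  · intro x hx1 hx2
    rw [Walk.support_reverse, List.mem_reverse] at hx1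
    exact hfirst x hx1 (Walk.support_dropUntil_subset _ _ hx2)
  · intro x hx1 hx2
    rw [Walk.support_reverse, List.mem_reverse] at hx1
    exact hTD x hx1 hx2

private lemma steiner_mapped {W V : Type*} {K : SimpleGraph W} {G : SimpleGraph V}
    (f : W → V) (hinj : Function.Injective f)
    (hadj : ∀ {a b : W}, K.Adj a b → G.Adj (f a) (f b))
    (hK : K.Connected) (p q r : W) :
    ∃ c : V, c ∈ Set.range f ∧
      ∃ (Pp : G.Walk c (f p)) (Pq : G.Walk c (f q)) (Pr : G.Walk c (f r)),
      Pp.IsPath ∧ Pq.IsPath ∧ Pr.IsPath ∧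
      (∀ z ∈ Pp.support, z ∈ Set.range f) ∧ (∀ z ∈ Pq.support, z ∈ Set.range f) ∧
      (∀ z ∈ Pr.support, z ∈ Set.range f) ∧
      (∀ z, z ∈ Pp.support → z ∈ Pq.support → z = c) ∧
      (∀ z, z ∈ Pp.support → z ∈ Pr.support → z = c) ∧
      (∀ z, z ∈ Pq.support → z ∈ Pr.support → z = c) := by
  obtain ⟨c, Pp, Pq, Pr, h1, h2, h3, h12, h13, h23⟩ := steiner_in hK p q r
  let F : K →g G := ⟨f, fun h => hadj h⟩
  have hmem : ∀ {a b : W} (P : K.Walk a b) (z : V),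
      z ∈ (P.map F).support → ∃ w ∈ P.support, f w = z := by
    intro a b P z hz
    rw [Walk.support_map] at hz
    simp at hz; exact hz
  refine ⟨f c, ⟨c, rfl⟩, Pp.map F, Pq.map F, Pr.map F,
    Walk.map_isPath_of_injective hinj h1, Walk.map_isPath_of_injective hinj h2,
    Walk.map_isPath_of_injective hinj h3, ?_, ?_, ?_, ?_, ?_, ?_⟩
  · intro z hz; obtain ⟨w, _, hw⟩ := hmem Pp z hz; exact ⟨w, hw⟩
  · intro z hz; obtain ⟨w, _, hw⟩ := hmem Pq z hz; exact ⟨w, hw⟩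
  · intro z hz; obtain ⟨w, _, hw⟩ := hmem Pr z hz; exact ⟨w, hw⟩
  · intro z hz1 hz2
    obtain ⟨w1, hw1, he1⟩ := hmem Pp z hz1
    obtain ⟨w2, hw2, he2⟩ := hmem Pq z hz2
    have : w1 = w2 := hinj (he1.trans he2.symm)
    subst this
    exact he1 ▸ congrArg f (h12 w1 hw1 hw2)
  · intro z hz1 hz2
    obtain ⟨w1, hw1, he1⟩ := hmem Pp z hz1
    obtain ⟨w2, hw2, he2⟩ := hmem Pr z hz2
    have : w1 = w2 := hinj (he1.trans he2.symm)
    subst this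
    exact he1 ▸ congrArg f (h13 w1 hw1 hw2)
  · intro z hz1 hz2
    obtain ⟨w1, hw1, he1⟩ := hmem Pq z hz1
    obtain ⟨w2, hw2, he2⟩ := hmem Pr z hz2
    have : w1 = w2 := hinj (he1.trans he2.symm)
    subst this
    exact he1 ▸ congrArg f (h23 w1 hw1 hw2)

private lemma fansub_of_rootedPathMinor {V : Type} (G : SimpleGraph V) (v : V) (k : ℕ)
    (M : RootedPathMinor (G.induce {w : V | w ≠ v})
      {w : ↥{w : V | w ≠ v} | G.Adj v (w : V)} k) :
    Nonempty (FanSubdivision G v k) := by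
  classical
  set S' : Set V := {w : V | w ≠ v} with hS'def
  have h1 : ∀ i : Fin k, ∃ z : ↥S', z ∈ M.branch i ∧ G.Adj v ↑z := by
    intro i
    obtain ⟨z, hz⟩ := M.rooted i
    exact ⟨z, hz.1, hz.2⟩
  choose ub hub hadju using h1
  have h2 : ∀ (i : Fin k) (h : (i : ℕ) + 1 < k), ∃ a b : ↥S',
      a ∈ M.branch i ∧ b ∈ M.branch ⟨(i : ℕ) + 1, h⟩ ∧ G.Adj ↑a ↑b := by
    intro i h
    obtain ⟨a, ha, b, hb, hab⟩ := M.adj i ⟨(i : ℕ) + 1, h⟩ rfl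
    exact ⟨a, b, ha, hb, hab⟩
  choose ea eb hea heb heab using h2
  have ebcongr : ∀ {p q : Fin k} (h1 : (p : ℕ) + 1 < k) (h2 : (q : ℕ) + 1 < k),
      p = q → eb p h1 = eb q h2 := by rintro p q hp hq rfl; rfl
  have hprev : ∀ i : Fin k, (i : ℕ) - 1 < k := fun i => lt_of_le_of_lt (Nat.sub_le _ _) i.isLt
  have hprev1 : ∀ i : Fin k, 0 < (i : ℕ) → ((⟨(i : ℕ) - 1, hprev i⟩ : Fin k) : ℕ) + 1 < k := by
    intro i h
    show (i : ℕ) - 1 + 1 < k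
    have := i.isLt; omega
  let xb : Fin k → ↥S' := fun i =>
    if h : 0 < (i : ℕ) then eb ⟨(i : ℕ) - 1, hprev i⟩ (hprev1 i h) else ub i
  let yb : Fin k → ↥S' := fun i => if h : (i : ℕ) + 1 < k then ea i h else ub i
  have hxb_pos : ∀ (i : Fin k) (h : 0 < (i : ℕ)),
      xb i = eb ⟨(i : ℕ) - 1, hprev i⟩ (hprev1 i h) := fun i h => dif_pos h
  have hxb_zero : ∀ (i : Fin k), ¬ 0 < (i : ℕ) → xb i = ub i := fun i h => dif_neg h
  have hyb_pos : ∀ (i : Fin k) (h : (i : ℕ) + 1 < k), yb i = ea i h := fun i h => dif_pos h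
  have hyb_last : ∀ (i : Fin k), ¬ ((i : ℕ) + 1 < k) → yb i = ub i := fun i h => dif_neg h
  have hxbm : ∀ i : Fin k, xb i ∈ M.branch i := by
    intro i
    by_cases h : 0 < (i : ℕ)
    · rw [hxb_pos i h]
      have hmem := heb ⟨(i : ℕ) - 1, hprev i⟩ (hprev1 i h)
      have hidx : (⟨((⟨(i : ℕ) - 1, hprev i⟩ : Fin k) : ℕ) + 1, hprev1 i h⟩ : Fin k) = i := by
        apply Fin.ext
        show (i : ℕ) - 1 + 1 = (i : ℕ)
        omega
      rwa [hidx] at hmem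
    · rw [hxb_zero i h]; exact hub i
  have hybm : ∀ i : Fin k, yb i ∈ M.branch i := by
    intro i
    by_cases h : (i : ℕ) + 1 < k
    · rw [hyb_pos i h]; exact hea i h
    · rw [hyb_last i h]; exact hub i
  have hsegadj : ∀ (i : Fin k) (h : (i : ℕ) + 1 < k),
      G.Adj ↑(yb i) ↑(xb ⟨(i : ℕ) + 1, h⟩) := by
    intro i h
    have h0 : 0 < ((⟨(i : ℕ) + 1, h⟩ : Fin k) : ℕ) := by show 0 < (i : ℕ) + 1; omega
    rw [hyb_pos i h, hxb_pos _ h0]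
    have heq : eb ⟨((⟨(i : ℕ) + 1, h⟩ : Fin k) : ℕ) - 1, hprev _⟩ (hprev1 _ h0) = eb i h :=
      ebcongr _ _ (by apply Fin.ext; show (i : ℕ) + 1 - 1 = (i : ℕ); omega)
    rw [heq]
    exact heab i h
  let Bset : Fin k → Set V := fun i => Set.range (fun z : ↥(M.branch i) => ((z : ↥S') : V))
  have hBdisj : ∀ {i j : Fin k}, i ≠ j → ∀ {x : V}, x ∈ Bset i → x ∈ Bset j → False := by
    intro i j hij x hx1 hx2
    obtain ⟨z1, hz1⟩ := hx1
    obtain ⟨z2, hz2⟩ := hx2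
    have hco : (z1 : ↥S') = (z2 : ↥S') := Subtype.ext (hz1.trans hz2.symm)
    exact Set.disjoint_left.mp (M.disjoint i j hij) z1.2 (by rw [hco]; exact z2.2)
  have hBnotv : ∀ (i : Fin k) (x : V), x ∈ Bset i → x ≠ v := by
    intro i x hx
    obtain ⟨z, hz⟩ := hx
    rw [← hz]
    exact z.1.2
  have hstein : ∀ i : Fin k, ∃ c : V, c ∈ Bset i ∧
      ∃ (Pu : G.Walk c ↑(ub i)) (Px : G.Walk c ↑(xb i)) (Py : G.Walk c ↑(yb i)),
      Pu.IsPath ∧ Px.IsPath ∧ Py.IsPath ∧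
      (∀ z ∈ Pu.support, z ∈ Bset i) ∧ (∀ z ∈ Px.support, z ∈ Bset i) ∧
      (∀ z ∈ Py.support, z ∈ Bset i) ∧
      (∀ z, z ∈ Pu.support → z ∈ Px.support → z = c) ∧
      (∀ z, z ∈ Pu.support → z ∈ Py.support → z = c) ∧
      (∀ z, z ∈ Px.support → z ∈ Py.support → z = c) := by
    intro i
    have hinj : Function.Injective (fun z : ↥(M.branch i) => ((z : ↥S') : V)) := by
      intro a b hab
      exact Subtype.ext (Subtype.ext hab)
    have hadj2 : ∀ {a b : ↥(M.branch i)},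
        ((G.induce S').induce (M.branch i)).Adj a b →
        G.Adj ((a : ↥S') : V) ((b : ↥S') : V) := fun h => h
    obtain ⟨cc, hcc, Pp, Pq, Pr, hp1, hp2, hp3, hr1, hr2, hr3, h12, h13, h23⟩ :=
      steiner_mapped _ hinj hadj2 (M.connected i)
        ⟨ub i, hub i⟩ ⟨xb i, hxbm i⟩ ⟨yb i, hybm i⟩
    exact ⟨cc, hcc, Pp, Pq, Pr, hp1, hp2, hp3, hr1, hr2, hr3, h12, h13, h23⟩
  choose c hcB Pu Px Py hPu hPx hPy hBu hBx hBy hux huy hxy using hstein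
  let spk : ∀ i : Fin k, G.Walk v (c i) := fun i => Walk.cons (hadju i) (Pu i).reverse
  let sgm : ∀ (i : Fin k) (h : (i : ℕ) + 1 < k), G.Walk (c i) (c ⟨(i : ℕ) + 1, h⟩) :=
    fun i h => (Py i).append (Walk.cons (hsegadj i h) (Px ⟨(i : ℕ) + 1, h⟩).reverse)
  have hspk : ∀ (i : Fin k) (x : V), x ∈ (spk i).support ↔ x = v ∨ x ∈ (Pu i).support := by
    intro i x
    show x ∈ (Walk.cons (hadju i) (Pu i).reverse).support ↔ _
    rw [Walk.support_cons]
    simp [Walk.support_reverse]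
  have hsgm : ∀ (i : Fin k) (h : (i : ℕ) + 1 < k) (x : V),
      x ∈ (sgm i h).support ↔ x ∈ (Py i).support ∨ x ∈ (Px ⟨(i : ℕ) + 1, h⟩).support := by
    intro i h x
    show x ∈ ((Py i).append
      (Walk.cons (hsegadj i h) (Px ⟨(i : ℕ) + 1, h⟩).reverse)).support ↔ _
    rw [Walk.support_append, Walk.support_cons, List.tail_cons]
    simp [Walk.support_reverse]
  have hvPu : ∀ i : Fin k, v ∉ (Pu i).support := fun i hv => hBnotv i v (hBu i v hv) rfl
  refine ⟨⟨c, ?_, fun i => hBnotv i (c i) (hcB i), spk, ?_, sgm, ?_, ?_, ?_, ?_, ?_⟩⟩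
  · intro i j hij
    by_contra hne
    exact hBdisj hne (hcB i) (by rw [hij]; exact hcB j)
  · intro i
    show (Walk.cons (hadju i) (Pu i).reverse).IsPath
    apply Walk.IsPath.cons ((hPu i).reverse)
    rw [Walk.support_reverse, List.mem_reverse]
    exact hvPu i
  · intro i h
    show ((Py i).append (Walk.cons (hsegadj i h) (Px ⟨(i : ℕ) + 1, h⟩).reverse)).IsPath
    rw [Walk.isPath_def, Walk.support_append, Walk.support_cons, List.tail_cons]
    apply List.Nodup.append (hPy i).support_nodup ((hPx _).reverse.support_nodup)
    intro a ha hb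
    rw [Walk.support_reverse, List.mem_reverse] at hb
    refine hBdisj ?_ (hBy i a ha) (hBx _ a hb)
    intro hEq
    have h2 : (i : ℕ) = (i : ℕ) + 1 := congrArg Fin.val hEq
    omega
  · intro i h hv
    rcases (hsgm i h v).mp hv with h' | h'
    · exact hBnotv i v (hBy i v h') rfl
    · exact hBnotv _ v (hBx _ v h') rfl
  · intro i j hij
    apply Set.eq_singleton_iff_unique_mem.mpr
    refine ⟨⟨(hspk i v).mpr (Or.inl rfl), (hspk j v).mpr (Or.inl rfl)⟩, ?_⟩
    rintro x ⟨hx1, hx2⟩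
    rcases (hspk i x).mp hx1 with hxv | hx1'
    · exact hxv
    rcases (hspk j x).mp hx2 with hxv | hx2'
    · exact hxv
    exact (hBdisj hij (hBu i x hx1') (hBu j x hx2')).elim
  · intro i j h x hx
    obtain ⟨hx1, hx2⟩ := hx
    rcases (hspk i x).mp hx1 with hxv | hxu
    · rcases (hsgm j h x).mp hx2 with h' | h'
      · exact absurd hxv (hBnotv j x (hBy j x h'))
      · exact absurd hxv (hBnotv _ x (hBx _ x h'))
    · rcases (hsgm j h x).mp hx2 with hyj | hxj
      · by_cases hij : i = j
        · subst hij
          have hxc : x = c i := huy i x hxu hyj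
          exact ⟨hxc, Or.inl hxc⟩
        · exact (hBdisj hij (hBu i x hxu) (hBy j x hyj)).elim
      · by_cases hij : i = (⟨(j : ℕ) + 1, h⟩ : Fin k)
        · subst hij
          have hxc : x = c (⟨(j : ℕ) + 1, h⟩ : Fin k) := hux _ x hxu hxj
          exact ⟨hxc, Or.inr hxc⟩
        · exact (hBdisj hij (hBu i x hxu) (hBx _ x hxj)).elim
  · intro i j hi hj hij x hx
    obtain ⟨hx1, hx2⟩ := hx
    have hvij : (i : ℕ) ≠ (j : ℕ) := fun hh => hij (Fin.ext hh)
    rcases (hsgm i hi x).mp hx1 with hyi | hxi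
    · rcases (hsgm j hj x).mp hx2 with hyj | hxj
      · exact (hBdisj hij (hBy i x hyi) (hBy j x hyj)).elim
      · by_cases hc1 : (i : ℕ) = (j : ℕ) + 1
        · have hEq : i = (⟨(j : ℕ) + 1, hj⟩ : Fin k) := Fin.ext hc1
          have hxi' : x ∈ (Px i).support := by rw [hEq]; exact hxj
          have hxc : x = c i := hxy i x hxi' hyi
          refine ⟨Or.inl hxc, Or.inr ?_⟩
          rw [← hEq]; exact hxc
        · exact (hBdisj (fun hh => hc1 (congrArg Fin.val hh))
            (hBy i x hyi) (hBx _ x hxj)).elim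
    · rcases (hsgm j hj x).mp hx2 with hyj | hxj
      · by_cases hc2 : (j : ℕ) = (i : ℕ) + 1
        · have hEq : j = (⟨(i : ℕ) + 1, hi⟩ : Fin k) := Fin.ext hc2
          have hxj' : x ∈ (Px j).support := by rw [hEq]; exact hxi
          have hxc : x = c j := hxy j x hxj' hyj
          refine ⟨Or.inr ?_, Or.inl hxc⟩
          rw [← hEq]; exact hxc
        · exact (hBdisj (fun hh => hc2 (congrArg Fin.val hh))
            (hBy j x hyj) (hBx _ x hxi)).elim
      · have hne : (⟨(i : ℕ) + 1, hi⟩ : Fin k) ≠ (⟨(j : ℕ) + 1, hj⟩ : Fin k) := by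
          intro hh
          have h2 : (i : ℕ) + 1 = (j : ℕ) + 1 := congrArg Fin.val hh
          omega
        exact (hBdisj hne (hBx _ x hxi) (hBx _ x hxj)).elim

/-- if `G` excludes the `k`-fan as a topological minor then, given the lemma
bounding rooted treedepth by the absence of rooted path minors, for every vertex `v` the
rooted treedepth `td(G - v, N(v))` is at most `k(k-1)/2`. -/
theorem rooted_treedepth_of_no_fan (k : ℕ) {V : Type} (G : SimpleGraph V)
    (hfan : ∀ v : V, IsEmpty (FanSubdivision G v k))
    (hlem : ∀ (W : Type) (H : SimpleGraph W) (U : Set W),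
      IsEmpty (RootedPathMinor H U k) → RootedTreedepthLE H U Set.univ (k * (k - 1) / 2)) :
    ∀ v : V, RootedTreedepthLE (G.induce {w : V | w ≠ v})
      {w : ↥{w : V | w ≠ v} | G.Adj v (w : V)} Set.univ (k * (k - 1) / 2) := by
  intro v
  refine hlem _ _ _ ⟨fun M => ?_⟩
  exact (hfan v).false (fansub_of_rootedPathMinor G v k M).some
end
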